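/- arXiv:2408.15951 — 11 statements merged into one kernel-verified Lean document; each statement's English description precedes it below -/
import Mathlib

section
/- If H is an isometric subgraph of a connected graph G and X is a dual general position set of G, then X ∩ V(H) is a dual general position set of H. -/
open SimpleGraph

/-- `u` and `v` are `X`-positionable in `G`: every shortest `u,v`-path meets `X`
only possibly in its endpoints. -/
def Positionable {V : Type*} (G : SimpleGraph V) (X : Set V) (u v : V) : Prop :=
  ∀ p : G.Walk u v, p.length = G.dist u v → ∀ w ∈ p.support, w ∈ X → w = u ∨ w = v

/-- `X` is a general position set of `G`. -/
def IsGPSet {V : Type*} (G : SimpleGraph V) (X : Set V) : Prop :=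
  ∀ u ∈ X, ∀ v ∈ X, Positionable G X u v

/-- `X` is an outer general position set of `G`. -/
def IsOuterGPSet {V : Type*} (G : SimpleGraph V) (X : Set V) : Prop :=
  IsGPSet G X ∧ ∀ u ∈ X, ∀ v ∉ X, Positionable G X u v

/-- `X` is a dual general position set of `G`. -/
def IsDualGPSet {V : Type*} (G : SimpleGraph V) (X : Set V) : Prop :=
  IsGPSet G X ∧ ∀ u ∉ X, ∀ v ∉ X, Positionable G X u v

/-- `X` is a total general position set of `G`. -/
def IsTotalGPSet {V : Type*} (G : SimpleGraph V) (X : Set V) : Prop :=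
  ∀ u v : V, Positionable G X u v

/-- The outer general position number. -/
noncomputable def gpo {V : Type*} (G : SimpleGraph V) : ℕ :=
  sSup {n | ∃ X : Set V, IsOuterGPSet G X ∧ X.ncard = n}

/-- The dual general position number. -/
noncomputable def gpd {V : Type*} (G : SimpleGraph V) : ℕ :=
  sSup {n | ∃ X : Set V, IsDualGPSet G X ∧ X.ncard = n}

/-- The total general position number. -/
noncomputable def gpt {V : Type*} (G : SimpleGraph V) : ℕ :=
  sSup {n | ∃ X : Set V, IsTotalGPSet G X ∧ X.ncard = n}

/-- The closed neighborhood `N[u]`. -/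
def closedNbhd {V : Type*} (G : SimpleGraph V) (u : V) : Set V :=
  insert u (G.neighborSet u)

/-- A vertex is simplicial if its closed neighborhood induces a complete subgraph. -/
def IsSimplicial {V : Type*} (G : SimpleGraph V) (u : V) : Prop :=
  ∀ x ∈ closedNbhd G u, ∀ y ∈ closedNbhd G u, x ≠ y → G.Adj x y

/-- `s(G)`, the number of simplicial vertices. -/
noncomputable def simplicialNum {V : Type*} (G : SimpleGraph V) : ℕ :=
  {u | IsSimplicial G u}.ncard

/-- `u` is maximally distant from `v`. -/
def MaxDistant {V : Type*} (G : SimpleGraph V) (u v : V) : Prop :=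
  ∀ w, G.Adj u w → G.dist v w ≤ G.dist v u

/-- `u` and `v` are mutually maximally distant. -/
def MMD {V : Type*} (G : SimpleGraph V) (u v : V) : Prop :=
  MaxDistant G u v ∧ MaxDistant G v u

/-- `b(G)`, the number of boundary vertices (vertices MMD with some vertex). -/
noncomputable def boundaryNum {V : Type*} (G : SimpleGraph V) : ℕ :=
  {u | ∃ v, MMD G u v}.ncard

/-- `u` and `v` are true twins: distinct with equal closed neighborhoods. -/
def TrueTwins {V : Type*} (G : SimpleGraph V) (u v : V) : Prop :=
  u ≠ v ∧ closedNbhd G u = closedNbhd G v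

/-- The independence number of `G`. -/
noncomputable def indepNum {V : Type*} (G : SimpleGraph V) : ℕ :=
  sSup {n | ∃ S : Set V, (∀ u ∈ S, ∀ v ∈ S, u ≠ v → ¬ G.Adj u v) ∧ S.ncard = n}

/-- The `k`-independence number `α_k(G)`. -/
noncomputable def kIndepNum {V : Type*} (G : SimpleGraph V) (k : ℕ) : ℕ :=
  sSup {n | ∃ S : Set V, (∀ u ∈ S, ∀ v ∈ S, u ≠ v → k < G.dist u v) ∧ S.ncard = n}

/-- `G` has diameter `k`. -/
def HasDiam {V : Type*} (G : SimpleGraph V) (k : ℕ) : Prop :=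
  (∀ u v, G.dist u v ≤ k) ∧ ∃ u v, G.dist u v = k

/-- The strong product `G ⊠ H`. -/
def StrongProd {α β : Type*} (G : SimpleGraph α) (H : SimpleGraph β) : SimpleGraph (α × β) where
  Adj x y := (x.1 = y.1 ∧ H.Adj x.2 y.2) ∨ (G.Adj x.1 y.1 ∧ x.2 = y.2) ∨
    (G.Adj x.1 y.1 ∧ H.Adj x.2 y.2)
  symm := ⟨fun x y h => by
    rcases h with ⟨h1, h2⟩ | ⟨h1, h2⟩ | ⟨h1, h2⟩
    · exact Or.inl ⟨h1.symm, h2.symm⟩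
    · exact Or.inr (Or.inl ⟨h1.symm, h2.symm⟩)
    · exact Or.inr (Or.inr ⟨h1.symm, h2.symm⟩)⟩
  loopless := ⟨fun x h => by
    rcases h with ⟨_, h2⟩ | ⟨h1, _⟩ | ⟨h1, _⟩
    · exact H.loopless.irrefl _ h2
    · exact G.loopless.irrefl _ h1
    · exact G.loopless.irrefl _ h1⟩

/-- The lexicographic product `G ∘ H`. -/
def LexProd {α β : Type*} (G : SimpleGraph α) (H : SimpleGraph β) : SimpleGraph (α × β) where
  Adj x y := G.Adj x.1 y.1 ∨ (x.1 = y.1 ∧ H.Adj x.2 y.2)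
  symm := ⟨fun x y h => by
    rcases h with h1 | ⟨h1, h2⟩
    · exact Or.inl h1.symm
    · exact Or.inr ⟨h1.symm, h2.symm⟩⟩
  loopless := ⟨fun x h => by
    rcases h with h1 | ⟨_, h2⟩
    · exact G.loopless.irrefl _ h1
    · exact H.loopless.irrefl _ h2⟩

lemma positionable_lift {V : Type*} (G : SimpleGraph V) (H : G.Subgraph)
    (hiso : ∀ u v : H.verts, H.coe.dist u v = G.dist (u : V) (v : V))
    (X : Set V) (u v : H.verts) (h : Positionable G X u v) :
    Positionable H.coe {x : H.verts | (x : V) ∈ X} u v := by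
  intro p hp w hw hwX
  have hlen : (p.map (Subgraph.hom H)).length = G.dist (u : V) (v : V) := by
    rw [Walk.length_map, hp, hiso]
  have hwsup : (w : V) ∈ (p.map (Subgraph.hom H)).support := by
    rw [Walk.support_map]
    exact List.mem_map_of_mem hw
  rcases h _ hlen _ hwsup hwX with h1 | h1
  · exact Or.inl (Subtype.ext h1)
  · exact Or.inr (Subtype.ext h1)

/-- intersection of a dual general position set with an isometric subgraph. -/
theorem dualGPSet_inter_isometric {V : Type*} (G : SimpleGraph V) (hG : G.Connected)
    (H : G.Subgraph) (hiso : ∀ u v : H.verts, H.coe.dist u v = G.dist (u : V) (v : V))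
    (X : Set V) (hX : IsDualGPSet G X) :
    IsDualGPSet H.coe {x : H.verts | (x : V) ∈ X} := by
  constructor
  · intro u hu v hv
    exact positionable_lift G H hiso X u v (hX.1 _ hu _ hv)
  · intro u hu v hv
    exact positionable_lift G H hiso X u v (hX.2 _ hu _ hv)
end

section
/- If H is an isometric subgraph of a connected graph G and X is an outer general position set of G, then X ∩ V(H) is an outer general position set of H. -/
open SimpleGraph

/-- intersection of an outer general position set with an isometric subgraph. -/
theorem outerGPSet_inter_isometric {V : Type*} (G : SimpleGraph V) (hG : G.Connected)
    (H : G.Subgraph) (hiso : ∀ u v : H.verts, H.coe.dist u v = G.dist (u : V) (v : V))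
    (X : Set V) (hX : IsOuterGPSet G X) :
    IsOuterGPSet H.coe {x : H.verts | (x : V) ∈ X} := by
  have key : ∀ u v : H.verts, Positionable G X u v →
      Positionable H.coe {x : H.verts | (x : V) ∈ X} u v := by
    intro u v hpos p hlen w hw hwX
    have h1 : (p.map H.hom).length = G.dist (u : V) (v : V) := by
      rw [Walk.length_map, hlen, hiso]
    have := hpos (p.map H.hom) h1 w
      (by have h2 := List.mem_map_of_mem (f := H.hom) hw; rw [← Walk.support_map] at h2; exact h2) hwX
    rcases this with h | h
    · exact Or.inl (Subtype.ext h)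
    · exact Or.inr (Subtype.ext h)
  exact ⟨fun u hu v hv => key u v (hX.1 u hu v hv),
    fun u hu v hv => key u v (hX.2 u hu v hv)⟩
end

section
/- If H is an isometric subgraph of a connected graph G and X is a total general position set of G, then X ∩ V(H) is a total general position set of H. -/
open SimpleGraph

/-- intersection of a total general position set with an isometric subgraph. -/
theorem totalGPSet_inter_isometric {V : Type*} (G : SimpleGraph V) (hG : G.Connected)
    (H : G.Subgraph) (hiso : ∀ u v : H.verts, H.coe.dist u v = G.dist (u : V) (v : V))
    (X : Set V) (hX : IsTotalGPSet G X) :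
    IsTotalGPSet H.coe {x : H.verts | (x : V) ∈ X} := by
  intro u v p hp w hw hwX
  have hlen : (p.map H.hom).length = G.dist (u : V) (v : V) := by
    rw [Walk.length_map, hp, hiso]
  have := hX (u : V) (v : V) (p.map H.hom) hlen (w : V)
    (by show H.hom w ∈ (p.map H.hom).support; rw [Walk.support_map]; exact List.mem_map.mpr ⟨w, hw, rfl⟩) hwX
  rcases this with h | h
  · exact Or.inl (Subtype.ext h)
  · exact Or.inr (Subtype.ext h)
end

section
/- Let G be a connected graph with diameter 2 and no true twins. Then the outer general position number of G equals the independence number of G. -/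
open SimpleGraph

/-- diameter-2 graphs without true twins have gp_o = independence number. -/
theorem gpo_eq_indepNum_of_diam_two {V : Type*} [Fintype V] (G : SimpleGraph V)
    (hG : G.Connected) (hdiam : HasDiam G 2)
    (htw : ∀ u v : V, ¬ TrueTwins G u v) :
    gpo G = _root_.indepNum G := by
    classical
  -- key lemma: independent sets are outer GP sets
  have indep_to_ogp : ∀ S : Set V, (∀ u ∈ S, ∀ v ∈ S, u ≠ v → ¬ G.Adj u v) →
      IsOuterGPSet G S := by
    intro S hS
    have key : ∀ u ∈ S, ∀ v, Positionable G S u v := by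
      intro u hu v p hp w hw hwS
      by_contra hcon
      push_neg at hcon
      obtain ⟨hwu, hwv⟩ := hcon
      have ht : G.dist u w ≤ (p.takeUntil w hw).length := dist_le _
      have hd : G.dist w v ≤ (p.dropUntil w hw).length := dist_le _
      have hsum : (p.takeUntil w hw).length + (p.dropUntil w hw).length = p.length := by
        conv_rhs => rw [← p.take_spec hw]
        rw [Walk.length_append]
      have h1 : 1 ≤ G.dist u w := (hG.preconnected u w).pos_dist_of_ne hwu.symm
      have h2 : 1 ≤ G.dist w v := (hG.preconnected w v).pos_dist_of_ne hwv
      have hle : G.dist u w + G.dist w v ≤ 2 := by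
        calc G.dist u w + G.dist w v ≤ _ + _ := Nat.add_le_add ht hd
        _ = p.length := hsum
        _ = G.dist u v := hp
        _ ≤ 2 := hdiam.1 u v
      have : G.dist u w = 1 := by omega
      exact hS u hu w hwS (Ne.symm hwu) (dist_eq_one_iff_adj.mp this)
    exact ⟨fun u hu v _ => key u hu v, fun u hu v _ => key u hu v⟩
  -- key lemma: outer GP sets are independent
  have ogp_to_indep : ∀ X : Set V, IsOuterGPSet G X →
      ∀ u ∈ X, ∀ v ∈ X, u ≠ v → ¬ G.Adj u v := by
    intro X hX u hu v hv huv hadj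
    have hne : closedNbhd G u ≠ closedNbhd G v := fun h => htw u v ⟨huv, h⟩
    -- get w in the symmetric difference; wlog via a helper
    have main : ∀ a b : V, a ∈ X → b ∈ X → G.Adj a b →
        ∀ w, w ∈ closedNbhd G a → w ∉ closedNbhd G b → False := by
      intro a b ha hb hab w hwa hwb
      have hwneb : w ≠ b := fun h => hwb (by rw [h]; exact Set.mem_insert _ _)
      have hadjaw : G.Adj a w := by
        rcases hwa with h | h
        · exact absurd (Set.mem_insert_of_mem b hab.symm : a ∈ closedNbhd G b) (h ▸ hwb)
        · exact h
      have hnadj : ¬ G.Adj b w := fun h => hwb (Set.mem_insert_of_mem b h)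
      have hdist : G.dist b w = 2 := by
        have h1 : G.dist b w ≠ 1 := fun h => hnadj (dist_eq_one_iff_adj.mp h)
        have h0 : G.dist b w ≠ 0 := fun h => hwneb ((hG.dist_eq_zero_iff).mp h).symm
        have := hdiam.1 b w
        omega
      have hp : (Walk.cons hab.symm (Walk.cons hadjaw Walk.nil) : G.Walk b w).length
          = G.dist b w := by simp [hdist]
      have hpos : Positionable G X b w := by
        by_cases hwX : w ∈ X
        · exact hX.1 b hb w hwX
        · exact hX.2 b hb w hwX
      have := hpos _ hp a (by simp) ha
      rcases this with h | h
      · exact hab.ne' h.symm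
      · exact hadjaw.ne h
    rcases Set.not_subset.mp (fun h => hne (le_antisymm h (by
        by_contra hsub
        rcases Set.not_subset.mp hsub with ⟨w, hwv, hwu⟩
        exact main v u hv hu hadj.symm w hwv hwu))) with ⟨w, hwu, hwv⟩
    exact main u v hu hv hadj w hwu hwv
  unfold gpo _root_.indepNum
  congr 1
  ext n
  constructor
  · rintro ⟨X, hX, rfl⟩; exact ⟨X, ogp_to_indep X hX, rfl⟩
  · rintro ⟨S, hS, rfl⟩; exact ⟨S, indep_to_ogp S hS, rfl⟩
end

section
/- If G is a connected graph with diameter k ≥ 2, then the outer general position number of G is at least the (k−1)-independence number of G, i.e. gp_o(G) ≥ α_{k−1}(G). -/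
open SimpleGraph

/-- if diam(G) = k ≥ 2 then gp_o(G) ≥ α_{k-1}(G). -/
theorem gpo_ge_kIndepNum {V : Type*} [Fintype V] (G : SimpleGraph V)
    (hG : G.Connected) (k : ℕ) (hk : 2 ≤ k) (hdiam : HasDiam G k) :
    kIndepNum G (k - 1) ≤ gpo G := by
  classical
  -- Any (k-1)-independent set is an outer general position set.
  have key : ∀ S : Set V, (∀ u ∈ S, ∀ v ∈ S, u ≠ v → (k-1) < G.dist u v) →
      IsOuterGPSet G S := by
    intro S hS
    have hpos : ∀ u v : V, u ≠ v → 1 ≤ G.dist u v := by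
      intro u v huv
      have := (hG u v).pos_dist_of_ne huv
      omega
    have main : ∀ u v : V, u ∈ S → Positionable G S u v := by
      intro u v hu p hp w hw hwS
      by_contra hcon
      push_neg at hcon
      obtain ⟨hwu, hwv⟩ := hcon
      -- split path at w
      have hsplit : (p.takeUntil w hw).length + (p.dropUntil w hw).length = p.length := by
        have := p.take_spec hw
        calc (p.takeUntil w hw).length + (p.dropUntil w hw).length
            = ((p.takeUntil w hw).append (p.dropUntil w hw)).length := by
              rw [SimpleGraph.Walk.length_append]
          _ = p.length := by rw [this]
      have h1 : G.dist u w ≤ (p.takeUntil w hw).length := SimpleGraph.dist_le _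
      have h2 : G.dist w v ≤ (p.dropUntil w hw).length := SimpleGraph.dist_le _
      have hle : G.dist u w + G.dist w v ≤ G.dist u v := by
        rw [← hp, ← hsplit]; omega
      have hduw : k ≤ G.dist u w := by
        have := hS u hu w hwS (Ne.symm hwu)
        omega
      have hdwv : 1 ≤ G.dist w v := hpos w v hwv
      have hdle : G.dist u v ≤ k := hdiam.1 u v
      omega
    constructor
    · intro u hu v _; exact main u v hu
    · intro u hu v _; exact main u v hu
  -- bound gpo from below by each such set's cardinality
  have hbdd : BddAbove {n | ∃ X : Set V, IsOuterGPSet G X ∧ X.ncard = n} := by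
    refine ⟨Fintype.card V, ?_⟩
    rintro n ⟨X, _, rfl⟩
    exact le_trans (Set.ncard_le_ncard (Set.subset_univ X) Set.finite_univ)
      (le_of_eq (by simp [Set.ncard_univ]))
  have hne : (0:ℕ) ∈ {n | ∃ S : Set V, (∀ u ∈ S, ∀ v ∈ S, u ≠ v → (k-1) < G.dist u v) ∧ S.ncard = n} := by
    exact ⟨∅, by simp⟩
  apply csSup_le ⟨0, hne⟩
  rintro n ⟨S, hSind, rfl⟩
  exact le_csSup hbdd ⟨S, key S hSind, rfl⟩
end

section
/- In a connected graph G with diameter 2, two vertices u, v are mutually maximally distant if and only if d(u,v) = 2 or u and v are true twins. -/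
open SimpleGraph

/-- in a connected graph of diameter 2, MMD pairs are exactly the pairs
at distance 2 together with the pairs of true twins. -/
theorem mmd_iff_of_diam_two {V : Type*} (G : SimpleGraph V) (hG : G.Connected)
    (hdiam : HasDiam G 2) (u v : V) :
    MMD G u v ↔ G.dist u v = 2 ∨ TrueTwins G u v := by
  obtain ⟨hle, x, y, hxy⟩ := hdiam
  have hxyne : x ≠ y := by rintro rfl; simp [SimpleGraph.dist_self] at hxy
  have hnontriv : Nontrivial V := ⟨x, y, hxyne⟩
  constructor
  · rintro ⟨h1, h2⟩
    by_cases huv : u = v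
    · subst huv
      -- u has a neighbor
      obtain ⟨z, hz⟩ : ∃ z, G.Adj u z := by
        obtain ⟨z, hzne⟩ := exists_ne u
        have hd : 0 < G.dist u z := hG.pos_dist_of_ne (Ne.symm hzne)
        obtain ⟨p, hp⟩ := (hG u z).exists_walk_length_eq_dist
        cases p with
        | nil => simp [SimpleGraph.dist_self] at hd
        | cons h _ => exact ⟨_, h⟩
      have h3 := h1 z hz
      rw [SimpleGraph.dist_self] at h3
      have h4 : 0 < G.dist u z := hG.pos_dist_of_ne hz.ne
      omega
    · have hdpos : 0 < G.dist u v := hG.pos_dist_of_ne huv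
      have hdle := hle u v
      have hcase : G.dist u v = 1 ∨ G.dist u v = 2 := by omega
      rcases hcase with h | h
      · -- dist = 1, show true twins
        right
        have hadj : G.Adj u v := SimpleGraph.dist_eq_one_iff_adj.mp h
        refine ⟨huv, ?_⟩
        have key : ∀ a b : V, G.Adj a b → (∀ w, G.Adj a w → G.dist b w ≤ G.dist b a) →
            closedNbhd G a ⊆ closedNbhd G b := by
          intro a b hab hmax z hz
          rcases hz with rfl | hz
          · exact Or.inr hab.symm
          · have hd : G.dist b z ≤ 1 := by
              have := hmax z hz
              rwa [SimpleGraph.dist_comm (u := b) (v := a), SimpleGraph.dist_eq_one_iff_adj.mpr hab] at this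
            by_cases hbz : b = z
            · exact Or.inl hbz.symm
            · have : G.dist b z = 1 := le_antisymm hd (hG.pos_dist_of_ne hbz)
              exact Or.inr (SimpleGraph.dist_eq_one_iff_adj.mp this)
        exact le_antisymm (key u v hadj h1) (key v u hadj.symm h2)
      · left; exact h
  · rintro (h | ⟨hne, hN⟩)
    · constructor
      · intro w hw
        calc G.dist v w ≤ 2 := hle v w
        _ = G.dist v u := by rw [SimpleGraph.dist_comm]; exact h.symm
      · intro w hw
        calc G.dist u w ≤ 2 := hle u w
        _ = G.dist u v := h.symm
    · have hadj : G.Adj u v := by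
        have : u ∈ closedNbhd G v := hN ▸ Or.inl rfl
        rcases this with h | h
        · exact absurd h hne
        · exact h.symm
      have duv : G.dist u v = 1 := SimpleGraph.dist_eq_one_iff_adj.mpr hadj
      constructor
      · intro w hw
        have : w ∈ closedNbhd G v := hN ▸ Or.inr hw
        have dvu : G.dist v u = 1 := by rw [SimpleGraph.dist_comm]; exact duv
        rcases this with rfl | hvw
        · simp [SimpleGraph.dist_self]
        · rw [dvu, SimpleGraph.dist_eq_one_iff_adj.mpr hvw]
      · intro w hw
        have : w ∈ closedNbhd G u := hN ▸ Or.inr hw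
        rcases this with rfl | huw
        · simp [SimpleGraph.dist_self, duv]
        · rw [duv, SimpleGraph.dist_eq_one_iff_adj.mpr huw]
end

section
/- For graphs G and H, a vertex (g,h) of the strong product G ⊠ H is simplicial if and only if g is simplicial in G and h is simplicial in H; that is, S(G ⊠ H) = S(G) × S(H). -/
open SimpleGraph

lemma mem_closedNbhd_strongProd {α β : Type*} (G : SimpleGraph α) (H : SimpleGraph β)
    (g x : α) (h y : β) :
    (x, y) ∈ closedNbhd (StrongProd G H) (g, h) ↔
      x ∈ closedNbhd G g ∧ y ∈ closedNbhd H h := by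
  simp only [closedNbhd, Set.mem_insert_iff, SimpleGraph.mem_neighborSet, StrongProd,
    Prod.mk.injEq]
  constructor
  · rintro (⟨rfl, rfl⟩ | ⟨rfl, ha⟩ | ⟨ha, rfl⟩ | ⟨ha, hb⟩)
    · exact ⟨Or.inl rfl, Or.inl rfl⟩
    · exact ⟨Or.inl rfl, Or.inr ha⟩
    · exact ⟨Or.inr ha, Or.inl rfl⟩
    · exact ⟨Or.inr ha, Or.inr hb⟩
  · rintro ⟨rfl | ha, rfl | hb⟩
    · exact Or.inl ⟨rfl, rfl⟩
    · exact Or.inr (Or.inl ⟨rfl, hb⟩)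
    · exact Or.inr (Or.inr (Or.inl ⟨ha, rfl⟩))
    · exact Or.inr (Or.inr (Or.inr ⟨ha, hb⟩))

lemma simplicial_strongProd_aux {α β : Type*} (G : SimpleGraph α) (H : SimpleGraph β)
    (g : α) (h : β) : IsSimplicial (StrongProd G H) (g, h) ↔
      IsSimplicial G g ∧ IsSimplicial H h := by
  constructor
  · intro hs
    constructor
    · intro x hx y hy hxy
      have := hs (x, h) ((mem_closedNbhd_strongProd G H g x h h).2
        ⟨hx, Or.inl rfl⟩) (y, h) ((mem_closedNbhd_strongProd G H g y h h).2
        ⟨hy, Or.inl rfl⟩) (by simp [hxy])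
      rcases this with ⟨h1, h2⟩ | ⟨h1, _⟩ | ⟨h1, h2⟩
      · exact absurd h2 (H.loopless.irrefl h)
      · exact h1
      · exact absurd h2 (H.loopless.irrefl h)
    · intro x hx y hy hxy
      have := hs (g, x) ((mem_closedNbhd_strongProd G H g g h x).2
        ⟨Or.inl rfl, hx⟩) (g, y) ((mem_closedNbhd_strongProd G H g g h y).2
        ⟨Or.inl rfl, hy⟩) (by simp [hxy])
      rcases this with ⟨_, h2⟩ | ⟨h1, _⟩ | ⟨h1, h2⟩
      · exact h2
      · exact absurd h1 (G.loopless.irrefl g)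
      · exact absurd h1 (G.loopless.irrefl g)
  · rintro ⟨hg, hh⟩ ⟨x1, x2⟩ hx ⟨y1, y2⟩ hy hxy
    rw [mem_closedNbhd_strongProd] at hx hy
    by_cases h1 : x1 = y1
    · subst h1
      have h2 : x2 ≠ y2 := fun e => hxy (by rw [e])
      exact Or.inl ⟨rfl, hh x2 hx.2 y2 hy.2 h2⟩
    · have hadj : G.Adj x1 y1 := hg x1 hx.1 y1 hy.1 h1
      by_cases h2 : x2 = y2
      · exact Or.inr (Or.inl ⟨hadj, h2⟩)
      · exact Or.inr (Or.inr ⟨hadj, hh x2 hx.2 y2 hy.2 h2⟩)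

/-- simplicial vertices of a strong product, S(G ⊠ H) = S(G) × S(H). -/
theorem simplicial_strongProd {α β : Type*} (G : SimpleGraph α) (H : SimpleGraph β) :
    (∀ (g : α) (h : β), IsSimplicial (StrongProd G H) (g, h) ↔
      IsSimplicial G g ∧ IsSimplicial H h) ∧
    {p : α × β | IsSimplicial (StrongProd G H) p} =
      {p : α × β | IsSimplicial G p.1 ∧ IsSimplicial H p.2} := by
  refine ⟨simplicial_strongProd_aux G H, ?_⟩
  ext ⟨g, h⟩
  exact simplicial_strongProd_aux G H g h
end

section
/- If G and H are connected graphs of order at least 2, then gp_o(G ⊠ H) ≤ b(G)·b(H), where b denotes the number of boundary vertices (vertices that are mutually maximally distant with some vertex). -/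
open SimpleGraph

section StrongProdAux

variable {α β : Type*} {G : SimpleGraph α} {H : SimpleGraph β}

private lemma strongProd_exists_walk : ∀ {g g' : α} (p : G.Walk g g') {h h' : β}
    (q : H.Walk h h'),
    ∃ r : (StrongProd G H).Walk (g, h) (g', h'), r.length ≤ max p.length q.length := by
  intro g g' p
  induction p with
  | nil =>
    intro h h' q
    induction q with
    | nil => exact ⟨Walk.nil, by simp⟩
    | @cons h c h' hadjH q ihq =>
      obtain ⟨r, hr⟩ := ihq
      refine ⟨Walk.cons (show (StrongProd G H).Adj (_, h) (_, c) from Or.inl ⟨rfl, hadjH⟩) r, ?_⟩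
      simp only [Walk.length_cons, Walk.length_nil] at *
      omega
  | @cons g c g'' hadj p ih =>
    intro h h' q
    cases q with
    | nil =>
      obtain ⟨r, hr⟩ := ih Walk.nil
      refine ⟨Walk.cons (show (StrongProd G H).Adj (g, h) (c, h) from Or.inr (Or.inl ⟨hadj, rfl⟩)) r, ?_⟩
      simp only [Walk.length_cons, Walk.length_nil] at *
      omega
    | @cons _ d _ hadjH q' =>
      obtain ⟨r, hr⟩ := ih q'
      refine ⟨Walk.cons (show (StrongProd G H).Adj (g, h) (c, d) from Or.inr (Or.inr ⟨hadj, hadjH⟩)) r, ?_⟩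
      simp only [Walk.length_cons] at *
      omega

private lemma strongProd_connected (hG : G.Connected) (hH : H.Connected) :
    (StrongProd G H).Connected := by
  have : Nonempty α := hG.nonempty
  have : Nonempty β := hH.nonempty
  rw [connected_iff]
  refine ⟨fun u v => ?_, inferInstance⟩
  obtain ⟨p⟩ := hG u.1 v.1
  obtain ⟨q⟩ := hH u.2 v.2
  obtain ⟨r, -⟩ := strongProd_exists_walk p q
  exact ⟨r.copy (by simp) (by simp)⟩

private lemma strongProd_dist_fst_le (hG : G.Connected) {u v : α × β}
    (r : (StrongProd G H).Walk u v) : G.dist u.1 v.1 ≤ r.length := by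
  induction r with
  | nil => simp
  | @cons u c v hadj r ih =>
    have h1 : G.dist u.1 c.1 ≤ 1 := by
      rcases hadj with ⟨h, _⟩ | ⟨h, _⟩ | ⟨h, _⟩
      · rw [h]; simp [SimpleGraph.dist_self]
      · exact le_of_eq (dist_eq_one_iff_adj.mpr h)
      · exact le_of_eq (dist_eq_one_iff_adj.mpr h)
    calc G.dist u.1 v.1 ≤ G.dist u.1 c.1 + G.dist c.1 v.1 := hG.dist_triangle
      _ ≤ (Walk.cons hadj r).length := by simp only [Walk.length_cons]; omega

private lemma strongProd_dist_snd_le (hH : H.Connected) {u v : α × β}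
    (r : (StrongProd G H).Walk u v) : H.dist u.2 v.2 ≤ r.length := by
  induction r with
  | nil => simp
  | @cons u c v hadj r ih =>
    have h1 : H.dist u.2 c.2 ≤ 1 := by
      rcases hadj with ⟨_, h⟩ | ⟨_, h⟩ | ⟨_, h⟩
      · exact le_of_eq (dist_eq_one_iff_adj.mpr h)
      · rw [h]; simp [SimpleGraph.dist_self]
      · exact le_of_eq (dist_eq_one_iff_adj.mpr h)
    calc H.dist u.2 v.2 ≤ H.dist u.2 c.2 + H.dist c.2 v.2 := hH.dist_triangle
      _ ≤ (Walk.cons hadj r).length := by simp only [Walk.length_cons]; omega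

private lemma strongProd_dist_eq (hG : G.Connected) (hH : H.Connected) (u v : α × β) :
    (StrongProd G H).dist u v = max (G.dist u.1 v.1) (H.dist u.2 v.2) := by
  refine le_antisymm ?_ ?_
  · obtain ⟨p, hp⟩ := hG.exists_walk_length_eq_dist u.1 v.1
    obtain ⟨q, hq⟩ := hH.exists_walk_length_eq_dist u.2 v.2
    obtain ⟨r, hr⟩ := strongProd_exists_walk p q
    calc (StrongProd G H).dist u v ≤ (r.copy (by simp) (by simp)).length :=
          SimpleGraph.dist_le _
      _ ≤ max p.length q.length := by rw [Walk.length_copy]; exact hr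
      _ = max (G.dist u.1 v.1) (H.dist u.2 v.2) := by rw [hp, hq]
  · obtain ⟨r, hr⟩ := (strongProd_connected hG hH).exists_walk_length_eq_dist u v
    exact max_le (hr ▸ strongProd_dist_fst_le hG r) (hr ▸ strongProd_dist_snd_le hH r)

end StrongProdAux

section Climb

variable {V : Type*} [Fintype V] {Γ : SimpleGraph V}

private lemma climb (hΓ : Γ.Connected) (x : V) :
    ∀ (n : ℕ) (c : V), Finset.univ.sup (Γ.dist x) ≤ Γ.dist x c + n →
      ∃ (v : V) (p : Γ.Walk c v), MaxDistant Γ v x ∧ Γ.dist x v = Γ.dist x c + p.length := by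
  intro n
  induction n with
  | zero =>
    intro c hc
    refine ⟨c, Walk.nil, fun w _ => ?_, by simp⟩
    exact le_trans (Finset.le_sup (Finset.mem_univ w)) (by omega)
  | succ n ih =>
    intro c hc
    by_cases hmd : MaxDistant Γ c x
    · exact ⟨c, Walk.nil, hmd, by simp⟩
    · obtain ⟨w, hadj, hlt⟩ : ∃ w, Γ.Adj c w ∧ Γ.dist x c < Γ.dist x w := by
        simp only [MaxDistant, not_forall, not_le] at hmd
        obtain ⟨w, hadj, hlt⟩ := hmd
        exact ⟨w, hadj, hlt⟩
      have hd : Γ.dist x w = Γ.dist x c + 1 := by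
        have ht : Γ.dist x w ≤ Γ.dist x c + Γ.dist c w := hΓ.dist_triangle
        have h1 : Γ.dist c w = 1 := dist_eq_one_iff_adj.mpr hadj
        omega
      obtain ⟨v, p, hv, hdist⟩ := ih w (by omega)
      exact ⟨v, Walk.cons hadj p, hv, by simp only [Walk.length_cons]; omega⟩

private lemma outerGP_maxDistant (hΓ : Γ.Connected) {X : Set V} (hX : IsOuterGPSet Γ X)
    {u x : V} (hu : u ∈ X) (hx : x ∈ X) (hne : u ≠ x) : MaxDistant Γ u x := by
  intro w hadj
  by_contra hlt
  push_neg at hlt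
  have hd1 : Γ.dist x w = Γ.dist x u + 1 := by
    have ht : Γ.dist x w ≤ Γ.dist x u + Γ.dist u w := hΓ.dist_triangle
    have h1 : Γ.dist u w = 1 := dist_eq_one_iff_adj.mpr hadj
    omega
  obtain ⟨v, p, hv, hdv⟩ := climb hΓ x (Finset.univ.sup (Γ.dist x)) w (by omega)
  obtain ⟨q, hq⟩ := hΓ.exists_walk_length_eq_dist x u
  set r := q.append (Walk.cons hadj p) with hr
  have hrlen : r.length = Γ.dist x v := by
    rw [hr, Walk.length_append, Walk.length_cons]
    omega
  have humem : u ∈ r.support := by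
    rw [hr, Walk.support_append]
    exact List.mem_append_left _ (Walk.end_mem_support q)
  have hvne : u ≠ v := by
    rintro rfl
    omega
  have hpos : Positionable Γ X x v := by
    by_cases hvX : v ∈ X
    · exact hX.1 x hx v hvX
    · exact hX.2 x hx v hvX
  rcases hpos r hrlen u humem hu with h | h
  · exact hne h
  · exact hvne h

end Climb

section MMDProd

variable {α β : Type*} {G : SimpleGraph α} {H : SimpleGraph β}

private lemma product_mmd_fst (hG : G.Connected) (hH : H.Connected) {u x : α × β}
    (hm : MMD (StrongProd G H) u x) (hle : H.dist u.2 x.2 ≤ G.dist u.1 x.1) :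
    MMD G u.1 x.1 := by
  have key : ∀ (a b : α × β), H.dist a.2 b.2 ≤ G.dist a.1 b.1 →
      MaxDistant (StrongProd G H) a b → MaxDistant G a.1 b.1 := by
    intro a b hab hmd w hadj
    have h1 : (StrongProd G H).Adj a (w, a.2) := Or.inr (Or.inl ⟨hadj, rfl⟩)
    have h2 := hmd (w, a.2) h1
    rw [strongProd_dist_eq hG hH, strongProd_dist_eq hG hH] at h2
    have h3 : H.dist b.2 a.2 ≤ G.dist b.1 a.1 := by
      rw [SimpleGraph.dist_comm, @SimpleGraph.dist_comm _ G]
      exact hab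
    have h5 : G.dist b.1 w ≤ max (G.dist b.1 a.1) (H.dist b.2 a.2) :=
      le_trans (le_max_left _ _) h2
    rwa [max_eq_left h3] at h5
  constructor
  · exact key u x hle hm.1
  · refine key x u ?_ hm.2
    rw [SimpleGraph.dist_comm, @SimpleGraph.dist_comm _ G]
    exact hle

private lemma product_mmd_snd (hG : G.Connected) (hH : H.Connected) {u x : α × β}
    (hm : MMD (StrongProd G H) u x) (hle : G.dist u.1 x.1 ≤ H.dist u.2 x.2) :
    MMD H u.2 x.2 := by
  have key : ∀ (a b : α × β), G.dist a.1 b.1 ≤ H.dist a.2 b.2 →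
      MaxDistant (StrongProd G H) a b → MaxDistant H a.2 b.2 := by
    intro a b hab hmd w hadj
    have h1 : (StrongProd G H).Adj a (a.1, w) := Or.inl ⟨rfl, hadj⟩
    have h2 := hmd (a.1, w) h1
    rw [strongProd_dist_eq hG hH, strongProd_dist_eq hG hH] at h2
    have h3 : G.dist b.1 a.1 ≤ H.dist b.2 a.2 := by
      rw [SimpleGraph.dist_comm, @SimpleGraph.dist_comm _ H]
      exact hab
    have h5 : H.dist b.2 w ≤ max (G.dist b.1 a.1) (H.dist b.2 a.2) :=
      le_trans (le_max_right _ _) h2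
    rwa [max_eq_right h3] at h5
  constructor
  · exact key u x hle hm.1
  · refine key x u ?_ hm.2
    rw [SimpleGraph.dist_comm, @SimpleGraph.dist_comm _ H]
    exact hle

end MMDProd

private lemma boundary_nonempty {V : Type*} [Fintype V] [Nonempty V] (Γ : SimpleGraph V) :
    {u | ∃ v, MMD Γ u v}.Nonempty := by
  obtain ⟨⟨u, v⟩, -, hmax⟩ := Finset.exists_max_image (Finset.univ : Finset (V × V))
    (fun p => Γ.dist p.1 p.2) ⟨(Classical.arbitrary V, Classical.arbitrary V), Finset.mem_univ _⟩
  refine ⟨u, v, fun w _ => ?_, fun w _ => ?_⟩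
  · calc Γ.dist v w ≤ Γ.dist u v := hmax (v, w) (Finset.mem_univ _)
      _ = Γ.dist v u := SimpleGraph.dist_comm ..
  · exact hmax (u, w) (Finset.mem_univ _)

section Counting

variable {α β : Type*} [Fintype α] [Fintype β]

private lemma ncard_sprod (A : Set α) (B : Set β) :
    (A ×ˢ B).ncard = A.ncard * B.ncard := by
  rw [← Nat.card_coe_set_eq, ← Nat.card_coe_set_eq, ← Nat.card_coe_set_eq,
    Nat.card_congr (Equiv.Set.prod A B), Nat.card_prod]

private lemma count_core (A : Set α) (B : Set β) (hA : A.Nonempty) (X : Set (α × β))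
    (hP : ∀ u ∈ X, ∀ x ∈ X, u ≠ x →
      (u.1 ∈ A ∧ x.1 ∈ A ∧ u.1 ≠ x.1) ∨ (u.2 ∈ B ∧ x.2 ∈ B ∧ u.2 ≠ x.2))
    (hC : ∀ u ∈ X, u.2 ∈ B) :
    X.ncard ≤ A.ncard * B.ncard := by
  classical
  set Bad := {u ∈ X | u.1 ∉ A} with hBadDef
  set K := Prod.snd '' Bad with hKDef
  have hBadX : Bad ⊆ X := Set.sep_subset _ _
  have hKB : K ⊆ B := by rintro _ ⟨u, hu, rfl⟩; exact hC u hu.1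
  have hinj : Set.InjOn Prod.snd Bad := by
    intro p hp q hq h2
    by_contra hne
    rcases hP p hp.1 q hq.1 hne with ⟨h1, -, -⟩ | ⟨-, -, h2'⟩
    · exact hp.2 h1
    · exact h2' h2
  have hgood : X \ Bad ⊆ A ×ˢ (B \ K) := by
    rintro u ⟨huX, hub⟩
    have hu1 : u.1 ∈ A := by by_contra h; exact hub ⟨huX, h⟩
    refine ⟨hu1, hC u huX, ?_⟩
    rintro ⟨q, hq, h2⟩
    have hne : u ≠ q := by rintro rfl; exact hq.2 hu1
    rcases hP u huX q hq.1 hne with ⟨-, h1, -⟩ | ⟨-, -, h2'⟩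
    · exact hq.2 h1
    · exact h2' h2.symm
  have hsplit : (X \ Bad).ncard + Bad.ncard = X.ncard :=
    Set.ncard_diff_add_ncard_of_subset hBadX
  have h1 : (X \ Bad).ncard ≤ A.ncard * (B \ K).ncard := by
    calc (X \ Bad).ncard ≤ (A ×ˢ (B \ K)).ncard := Set.ncard_le_ncard hgood (Set.toFinite _)
      _ = A.ncard * (B \ K).ncard := ncard_sprod _ _
  have h2 : Bad.ncard = K.ncard := (Set.ncard_image_of_injOn hinj).symm
  have h3 : (B \ K).ncard = B.ncard - K.ncard := Set.ncard_diff hKB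
  have hK_le : K.ncard ≤ B.ncard := Set.ncard_le_ncard hKB (Set.toFinite _)
  have hA1 : 1 ≤ A.ncard := (Set.ncard_pos).mpr hA
  rw [h3] at h1
  calc X.ncard = (X \ Bad).ncard + Bad.ncard := hsplit.symm
    _ ≤ A.ncard * (B.ncard - K.ncard) + K.ncard := by omega
    _ ≤ A.ncard * (B.ncard - K.ncard) + A.ncard * K.ncard :=
        Nat.add_le_add_left (Nat.le_mul_of_pos_left _ hA1) _
    _ = A.ncard * (B.ncard - K.ncard + K.ncard) := (Nat.mul_add ..).symm
    _ = A.ncard * B.ncard := by rw [Nat.sub_add_cancel hK_le]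

private lemma count_aux (A : Set α) (B : Set β) (hA : A.Nonempty) (hB : B.Nonempty)
    (X : Set (α × β))
    (hP : ∀ u ∈ X, ∀ x ∈ X, u ≠ x →
      (u.1 ∈ A ∧ x.1 ∈ A ∧ u.1 ≠ x.1) ∨ (u.2 ∈ B ∧ x.2 ∈ B ∧ u.2 ≠ x.2)) :
    X.ncard ≤ A.ncard * B.ncard := by
  classical
  have hA1 : 1 ≤ A.ncard := (Set.ncard_pos).mpr hA
  have hB1 : 1 ≤ B.ncard := (Set.ncard_pos).mpr hB
  by_cases hsmall : X.ncard ≤ 1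
  · calc X.ncard ≤ 1 := hsmall
      _ ≤ A.ncard * B.ncard := Nat.one_le_iff_ne_zero.mpr (by positivity)
  · push_neg at hsmall
    by_cases hBadE : ∃ u ∈ X, u.1 ∉ A
    · obtain ⟨u₀, hu₀X, hu₀⟩ := hBadE
      have hC : ∀ x ∈ X, x.2 ∈ B := by
        intro x hx
        by_cases hxu : x = u₀
        · subst hxu
          obtain ⟨y, hy, hyne⟩ := Set.exists_ne_of_one_lt_ncard hsmall x
          rcases hP x hx y hy (Ne.symm hyne) with ⟨h1, -, -⟩ | ⟨h1, -, -⟩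
          · exact absurd h1 hu₀
          · exact h1
        · rcases hP x hx u₀ hu₀X hxu with ⟨-, h1, -⟩ | ⟨h1, -, -⟩
          · exact absurd h1 hu₀
          · exact h1
      exact count_core A B hA X hP hC
    · push_neg at hBadE
      have hswap := count_core B A hB (Prod.swap '' X) ?_ ?_
      · rwa [Set.ncard_image_of_injective X Prod.swap_injective, Nat.mul_comm B.ncard] at hswap
      · rintro _ ⟨u, hu, rfl⟩ _ ⟨x, hx, rfl⟩ hne
        have hne' : u ≠ x := fun h => hne (by rw [h])
        rcases hP u hu x hx hne' with ⟨h1, h2, h3⟩ | ⟨h1, h2, h3⟩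
        · exact Or.inr ⟨h1, h2, h3⟩
        · exact Or.inl ⟨h1, h2, h3⟩
      · rintro _ ⟨u, hu, rfl⟩
        exact hBadE u hu

end Counting


/-- gp_o(G ⊠ H) ≤ b(G)·b(H). -/
theorem gpo_strongProd_upper {α β : Type*} [Fintype α] [Fintype β]
    (G : SimpleGraph α) (H : SimpleGraph β) (hG : G.Connected) (hH : H.Connected)
    (h2G : 2 ≤ Fintype.card α) (h2H : 2 ≤ Fintype.card β) :
    gpo (StrongProd G H) ≤ boundaryNum G * boundaryNum H := by
  classical
  have hΓ : (StrongProd G H).Connected := strongProd_connected hG hH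
  have : Nonempty α := hG.nonempty
  have : Nonempty β := hH.nonempty
  unfold gpo boundaryNum
  apply csSup_le'
  rintro n ⟨X, hX, rfl⟩
  apply count_aux _ _ (boundary_nonempty G) (boundary_nonempty H) X
  intro u hu x hx hne
  have hmmd : MMD (StrongProd G H) u x :=
    ⟨outerGP_maxDistant hΓ hX hu hx hne, outerGP_maxDistant hΓ hX hx hu hne.symm⟩
  rcases le_total (H.dist u.2 x.2) (G.dist u.1 x.1) with hle | hle
  · left
    have hm := product_mmd_fst hG hH hmmd hle
    refine ⟨⟨x.1, hm⟩, ⟨u.1, hm.2, hm.1⟩, ?_⟩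
    intro h1eq
    have h0 : G.dist u.1 x.1 = 0 := by rw [h1eq]; exact SimpleGraph.dist_self
    have h20 : H.dist u.2 x.2 = 0 := by omega
    have h2eq : u.2 = x.2 := (hH.dist_eq_zero_iff).mp h20
    exact hne (Prod.ext h1eq h2eq)
  · right
    have hm := product_mmd_snd hG hH hmmd hle
    refine ⟨⟨x.2, hm⟩, ⟨u.2, hm.2, hm.1⟩, ?_⟩
    intro h2eq
    have h0 : H.dist u.2 x.2 = 0 := by rw [h2eq]; exact SimpleGraph.dist_self
    have h10 : G.dist u.1 x.1 = 0 := by omega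
    have h1eq : u.1 = x.1 := (hG.dist_eq_zero_iff).mp h10
    exact hne (Prod.ext h1eq h2eq)
end

section
/- If H is a connected graph and n ≥ 1, then gp_d(K_n ⊠ H) = n · gp_d(H). -/
open SimpleGraph

namespace GPDAux

variable {β : Type*} {n : ℕ} {H : SimpleGraph β}

local notation "P" => StrongProd (⊤ : SimpleGraph (Fin n)) H

lemma adj_of_prod {x z : Fin n × β} (e : (P).Adj x z) (hne : x.2 ≠ z.2) :
    H.Adj x.2 z.2 := by
  rcases e with ⟨_, a⟩ | ⟨_, hz⟩ | ⟨_, a⟩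
  · exact a
  · exact absurd hz hne
  · exact a

/-- layer embedding is a graph hom -/
def layerHom (i : Fin n) : H →g (P) where
  toFun h := (i, h)
  map_rel' a := Or.inl ⟨rfl, a⟩

open scoped Classical in
noncomputable def proj : ∀ {x y : Fin n × β}, (P).Walk x y → H.Walk x.2 y.2
  | _, _, .nil => .nil
  | x, _, .cons (v := z) e p =>
      if h : x.2 = z.2 then (proj p).copy h.symm rfl
      else SimpleGraph.Walk.cons (adj_of_prod e h) (proj p)

lemma proj_length_le : ∀ {x y : Fin n × β} (p : (P).Walk x y), (proj p).length ≤ p.length := by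
  intro x y p
  induction p with
  | nil => simp [proj]
  | cons e p ih =>
    simp only [proj]
    split
    · simpa using Nat.le_succ_of_le ih
    · simpa using ih

lemma mem_proj_support : ∀ {x y : Fin n × β} (p : (P).Walk x y) (w : Fin n × β),
    w ∈ p.support → w.2 ∈ (proj p).support := by
  intro x y p
  induction p with
  | nil => intro w hw; simp at hw; simp [proj, hw]
  | cons e p ih =>
    intro w hw
    simp only [SimpleGraph.Walk.support_cons, List.mem_cons] at hw
    simp only [proj]
    split
    · rename_i h
      rw [SimpleGraph.Walk.support_copy]
      rcases hw with rfl | hw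
      · rw [h]; exact SimpleGraph.Walk.start_mem_support _
      · exact ih w hw
    · rw [SimpleGraph.Walk.support_cons]
      rcases hw with rfl | hw
      · exact List.mem_cons_self
      · exact List.mem_cons_of_mem _ (ih w hw)

lemma exists_walk_cross (i j : Fin n) {h h' : β} (q : H.Walk h h') (hq : 0 < q.length) :
    ∃ p : (P).Walk (i, h) (j, h'), p.length = q.length := by
  cases q with
  | nil => simp at hq
  | cons a q' =>
    rename_i z
    by_cases hij : i = j
    · exact ⟨SimpleGraph.Walk.cons (Or.inl ⟨hij, a⟩) (q'.map (layerHom j)), congrArg (· + 1) (SimpleGraph.Walk.length_map _ _)⟩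
    · exact ⟨SimpleGraph.Walk.cons (Or.inr (Or.inr ⟨hij, a⟩)) (q'.map (layerHom j)), congrArg (· + 1) (SimpleGraph.Walk.length_map _ _)⟩

lemma reach (hH : H.Connected) (x y : Fin n × β) : (P).Reachable x y := by
  obtain ⟨i, h⟩ := x; obtain ⟨j, h'⟩ := y
  by_cases hh : h = h'
  · subst hh
    by_cases hij : i = j
    · subst hij; exact SimpleGraph.Reachable.refl _
    · exact SimpleGraph.Adj.reachable (Or.inr (Or.inl ⟨by simpa using hij, rfl⟩))
  · obtain ⟨q⟩ := hH h h'
    have hq : 0 < q.length := by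
      rcases Nat.eq_zero_or_pos q.length with h0 | h0
      · exact absurd (q.eq_of_length_eq_zero h0) hh
      · exact h0
    obtain ⟨p, _⟩ := exists_walk_cross i j q hq
    exact ⟨p⟩

lemma prodConnected (hH : H.Connected) (hn : 1 ≤ n) : (P).Connected := by
  have : Nonempty β := hH.nonempty
  have : Nonempty (Fin n) := ⟨⟨0, hn⟩⟩
  exact ⟨fun x y => reach hH x y⟩

lemma dist_prod_eq (hH : H.Connected) (i j : Fin n) {h h' : β} (hne : h ≠ h') :
    (P).dist (i, h) (j, h') = H.dist h h' := by
  apply le_antisymm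
  · obtain ⟨q, hq⟩ := (hH h h').exists_walk_length_eq_dist
    have hpos : 0 < q.length := by
      rw [hq]; exact hH.pos_dist_of_ne hne
    obtain ⟨p, hp⟩ := exists_walk_cross i j q hpos
    calc (P).dist (i, h) (j, h') ≤ p.length := SimpleGraph.dist_le p
      _ = H.dist h h' := by rw [hp, hq]
  · obtain ⟨p, hp⟩ := (reach hH (i, h) (j, h')).exists_walk_length_eq_dist
    calc H.dist h h' ≤ (proj p).length := SimpleGraph.dist_le (proj p)
      _ ≤ p.length := proj_length_le p
      _ = _ := hp

lemma on_geodesic {V : Type*} {G : SimpleGraph V} (hG : G.Connected) {u v : V}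
    (p : G.Walk u v) (hp : p.length = G.dist u v) {w : V} (hw : w ∈ p.support) :
    G.dist u w + G.dist w v = G.dist u v := by
  classical
  have hsplit : (p.takeUntil w hw).length + (p.dropUntil w hw).length = p.length := by
    rw [← SimpleGraph.Walk.length_append, p.take_spec hw]
  have h1 : G.dist u w ≤ (p.takeUntil w hw).length := SimpleGraph.dist_le _
  have h2 : G.dist w v ≤ (p.dropUntil w hw).length := SimpleGraph.dist_le _
  have h3 : G.dist u v ≤ G.dist u w + G.dist w v := hG.dist_triangle
  omega


lemma positionable_prod (hH : H.Connected) (hn : 1 ≤ n) (S : Set β) (i j : Fin n) (h h' : β)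
    (hpos : h ≠ h' → Positionable H S h h') :
    Positionable (P) ((Set.univ : Set (Fin n)) ×ˢ S) (i, h) (j, h') := by
  intro p hp w hw hwX
  have hconn := prodConnected hH hn
  have key := on_geodesic hconn p hp hw
  by_cases hhh : h = h'
  · subst hhh
    have hle : (P).dist (i, h) (j, h) ≤ 1 := by
      by_cases hij : i = j
      · subst hij; simp [SimpleGraph.dist_self]
      · refine le_trans (SimpleGraph.dist_le
          (SimpleGraph.Walk.cons (Or.inr (Or.inl ⟨hij, rfl⟩)) SimpleGraph.Walk.nil)) (le_of_eq rfl)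
    have h0 : (P).dist (i, h) w = 0 ∨ (P).dist w (j, h) = 0 := by omega
    rcases h0 with h0 | h0
    · left; exact (hconn.dist_eq_zero_iff.mp h0).symm
    · right; exact hconn.dist_eq_zero_iff.mp h0
  · obtain ⟨k, z⟩ := w
    have hz : z ∈ S := hwX.2
    have hplen : p.length = H.dist h h' := by rw [hp, dist_prod_eq hH i j hhh]
    have hgeo : (proj p).length = H.dist h h' :=
      le_antisymm (le_trans (proj_length_le p) (le_of_eq hplen)) (SimpleGraph.dist_le _)
    have hzs : z ∈ (proj p).support := mem_proj_support p (k, z) hw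
    rcases hpos hhh (proj p) hgeo z hzs hz with rfl | rfl
    · left
      have hd2 : (P).dist (k, z) (j, h') = H.dist z h' := dist_prod_eq hH k j hhh
      have hd3 : (P).dist (i, z) (j, h') = H.dist z h' := dist_prod_eq hH i j hhh
      have hd1 : (P).dist (i, z) (k, z) = 0 := by omega
      exact (hconn.dist_eq_zero_iff.mp hd1).symm
    · right
      have hd2 : (P).dist (i, h) (k, z) = H.dist h z := dist_prod_eq hH i k hhh
      have hd3 : (P).dist (i, h) (j, z) = H.dist h z := dist_prod_eq hH i j hhh
      have hd1 : (P).dist (k, z) (j, z) = 0 := by omega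
      exact hconn.dist_eq_zero_iff.mp hd1

lemma dualGP_prod (hH : H.Connected) (hn : 1 ≤ n) (S : Set β) (hS : IsDualGPSet H S) :
    IsDualGPSet (P) ((Set.univ : Set (Fin n)) ×ˢ S) := by
  constructor
  · rintro ⟨i, h⟩ hu ⟨j, h'⟩ hv
    exact positionable_prod hH hn S i j h h' (fun _ => hS.1 h hu.2 h' hv.2)
  · rintro ⟨i, h⟩ hu ⟨j, h'⟩ hv
    have hu' : h ∉ S := fun hs => hu ⟨Set.mem_univ _, hs⟩
    have hv' : h' ∉ S := fun hs => hv ⟨Set.mem_univ _, hs⟩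
    exact positionable_prod hH hn S i j h h' (fun _ => hS.2 h hu' h' hv')

lemma positionable_slice (hH : H.Connected) (X : Set (Fin n × β)) (i : Fin n) (h h' : β)
    (hpos : h ≠ h' → Positionable (P) X (i, h) (i, h')) :
    Positionable H {z | (i, z) ∈ X} h h' := by
  intro q hq w hw hwX
  by_cases hhh : h = h'
  · subst hhh
    have key := on_geodesic hH q hq hw
    rw [SimpleGraph.dist_self] at key
    left
    exact (hH.dist_eq_zero_iff.mp (by omega)).symm
  · have hlen : (q.map (layerHom i)).length = (P).dist (i, h) (i, h') := by
      rw [SimpleGraph.Walk.length_map, hq, dist_prod_eq hH i i hhh]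
    have hmem : (i, w) ∈ (q.map (layerHom i)).support := by
      rw [SimpleGraph.Walk.support_map]
      exact List.mem_map_of_mem hw
    rcases hpos hhh (q.map (layerHom i)) hlen (i, w) hmem hwX with h1 | h1
    · left; exact congrArg Prod.snd h1
    · right; exact congrArg Prod.snd h1

lemma dualGP_slice (hH : H.Connected) (X : Set (Fin n × β)) (hX : IsDualGPSet (P) X) (i : Fin n) :
    IsDualGPSet H {z | (i, z) ∈ X} := by
  constructor
  · intro h hh h' hh'
    exact positionable_slice hH X i h h' (fun _ => hX.1 _ hh _ hh')
  · intro h hh h' hh'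
    exact positionable_slice hH X i h h' (fun _ => hX.2 _ hh _ hh')

lemma ncard_slices [Fintype β] (X : Set (Fin n × β)) :
    X.ncard = ∑ i : Fin n, {z | (i, z) ∈ X}.ncard := by
  classical
  rw [Set.ncard_eq_toFinset_card']
  rw [Finset.card_eq_sum_card_fiberwise (f := Prod.fst) (t := Finset.univ)
    (fun x _ => Finset.mem_univ _)]
  refine Finset.sum_congr rfl fun i _ => ?_
  rw [Set.ncard_eq_toFinset_card']
  have himg : X.toFinset.filter (fun x => x.1 = i)
      = {z | (i, z) ∈ X}.toFinset.image (fun z => (i, z)) := by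
    ext ⟨a, b⟩
    simp only [Finset.mem_filter, Set.mem_toFinset, Finset.mem_image, Set.mem_setOf_eq, Prod.mk.injEq]
    constructor
    · rintro ⟨hab, rfl⟩
      exact ⟨b, hab, rfl, rfl⟩
    · rintro ⟨z, hz, rfl, rfl⟩
      exact ⟨hz, rfl⟩
  rw [himg, Finset.card_image_of_injective _ (fun a b hab => congrArg Prod.snd hab)]

lemma ncard_prod [Fintype β] (S : Set β) :
    ((Set.univ : Set (Fin n)) ×ˢ S).ncard = n * S.ncard := by
  classical
  rw [Set.ncard_eq_toFinset_card', Set.toFinset_prod, Finset.card_product,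
    Set.ncard_eq_toFinset_card', Set.toFinset_univ, Finset.card_univ, Fintype.card_fin]

lemma empty_dual {V : Type*} (G : SimpleGraph V) : IsDualGPSet G (∅ : Set V) :=
  ⟨fun u hu => absurd hu (Set.notMem_empty u),
   fun _ _ _ _ _ _ w _ hw => absurd hw (Set.notMem_empty w)⟩

lemma gpd_bdd {V : Type*} [Fintype V] (G : SimpleGraph V) :
    BddAbove {m | ∃ X : Set V, IsDualGPSet G X ∧ X.ncard = m} := by
  refine ⟨Fintype.card V, ?_⟩
  rintro m ⟨X, _, rfl⟩
  simpa [Set.ncard_univ, Nat.card_eq_fintype_card] using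
    Set.ncard_le_ncard (Set.subset_univ X) Set.finite_univ

lemma gpd_spec {V : Type*} [Fintype V] (G : SimpleGraph V) :
    ∃ X : Set V, IsDualGPSet G X ∧ X.ncard = gpd G := by
  have hne : {m | ∃ X : Set V, IsDualGPSet G X ∧ X.ncard = m}.Nonempty :=
    ⟨0, ∅, empty_dual G, Set.ncard_empty _⟩
  exact Nat.sSup_mem hne (gpd_bdd G)

lemma le_gpd {V : Type*} [Fintype V] (G : SimpleGraph V) (X : Set V) (hX : IsDualGPSet G X) :
    X.ncard ≤ gpd G :=
  le_csSup (gpd_bdd G) ⟨X, hX, rfl⟩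

end GPDAux

/-- gp_d(K_n ⊠ H) = n·gp_d(H). -/
theorem gpd_strongProd_complete {β : Type*} [Fintype β] (H : SimpleGraph β)
    (hH : H.Connected) (n : ℕ) (hn : 1 ≤ n) :
    gpd (StrongProd (⊤ : SimpleGraph (Fin n)) H) = n * gpd H := by
  obtain ⟨S, hS, hScard⟩ := GPDAux.gpd_spec H
  obtain ⟨X, hX, hXcard⟩ := GPDAux.gpd_spec (StrongProd (⊤ : SimpleGraph (Fin n)) H)
  apply le_antisymm
  · rw [← hXcard, GPDAux.ncard_slices X]
    calc ∑ i : Fin n, {z | (i, z) ∈ X}.ncard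
        ≤ ∑ _i : Fin n, gpd H :=
          Finset.sum_le_sum fun i _ => GPDAux.le_gpd H _ (GPDAux.dualGP_slice hH X hX i)
      _ = n * gpd H := by simp [Finset.sum_const, Finset.card_univ, mul_comm]
  · have h1 := GPDAux.le_gpd (StrongProd (⊤ : SimpleGraph (Fin n)) H) _
      (GPDAux.dualGP_prod hH hn S hS)
    rw [GPDAux.ncard_prod, hScard] at h1
    exact h1
end

section
/- Let G and H be connected graphs of order at least 2. If H is complete, then the simplicial vertices of the lexicographic product G∘H are exactly S(G) × V(H); if H is not complete, then G∘H has no simplicial vertices. -/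
open SimpleGraph

/-- simplicial vertices of a lexicographic product. -/
theorem simplicial_lexProd {α β : Type*} [Fintype α] [Fintype β]
    (G : SimpleGraph α) (H : SimpleGraph β) (hG : G.Connected) (hH : H.Connected)
    (h2G : 2 ≤ Fintype.card α) (h2H : 2 ≤ Fintype.card β) :
    ((∀ u v : β, u ≠ v → H.Adj u v) →
      {p : α × β | IsSimplicial (LexProd G H) p} = {p : α × β | IsSimplicial G p.1}) ∧
    (¬ (∀ u v : β, u ≠ v → H.Adj u v) →
      ∀ p : α × β, ¬ IsSimplicial (LexProd G H) p) := by
  have memLex : ∀ (g : α) (h : β) (q : α × β),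
      q ∈ closedNbhd (LexProd G H) (g, h) ↔
        (q = (g, h) ∨ G.Adj g q.1 ∨ (g = q.1 ∧ H.Adj h q.2)) := by
    intro g h q
    rw [closedNbhd, Set.mem_insert_iff, SimpleGraph.mem_neighborSet]
    exact Iff.rfl
  have memG : ∀ (g x : α), x ∈ closedNbhd G g ↔ (x = g ∨ G.Adj g x) := by
    intro g x; simp [closedNbhd, SimpleGraph.mem_neighborSet]
  constructor
  · intro hcomp
    ext ⟨g, h⟩
    simp only [Set.mem_setOf_eq]
    constructor
    · intro hs x hx y hy hxy
      rw [memG] at hx hy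
      rcases hx with rfl | hx
      · rcases hy with rfl | hy
        · exact absurd rfl hxy
        · exact hy
      · rcases hy with rfl | hy
        · exact hx.symm
        · have h1 : (x, h) ∈ closedNbhd (LexProd G H) (g, h) :=
            (memLex g h (x, h)).mpr (Or.inr (Or.inl hx))
          have h2 : (y, h) ∈ closedNbhd (LexProd G H) (g, h) :=
            (memLex g h (y, h)).mpr (Or.inr (Or.inl hy))
          have hne : (x, h) ≠ (y, h) := by
            intro hc; exact hxy (congrArg Prod.fst hc)
          have := hs _ h1 _ h2 hne
          rcases this with h3 | ⟨h3, _⟩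
          · exact h3
          · exact absurd h3 hxy
    · intro hs q hq r hr hne
      rw [memLex] at hq hr
      have hq1 : q.1 ∈ closedNbhd G g := by
        rw [memG]
        rcases hq with rfl | h1 | ⟨h1, _⟩
        · exact Or.inl rfl
        · exact Or.inr h1
        · exact Or.inl h1.symm
      have hr1 : r.1 ∈ closedNbhd G g := by
        rw [memG]
        rcases hr with rfl | h1 | ⟨h1, _⟩
        · exact Or.inl rfl
        · exact Or.inr h1
        · exact Or.inl h1.symm
      by_cases h1 : q.1 = r.1
      · right
        refine ⟨h1, hcomp q.2 r.2 ?_⟩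
        intro hc; exact hne (Prod.ext h1 hc)
      · exact Or.inl (hs _ hq1 _ hr1 h1)
  · intro hnc p hs
    push_neg at hnc
    obtain ⟨u, v, huv, hadj⟩ := hnc
    have hg' : ∃ g', G.Adj p.1 g' := by
      obtain ⟨g'', hg''⟩ := Fintype.exists_ne_of_one_lt_card (by omega) p.1
      obtain ⟨w⟩ := hG p.1 g''
      cases w with
      | nil => exact absurd rfl hg''
      | cons hadj _ => exact ⟨_, hadj⟩
    obtain ⟨g', hgadj⟩ := hg'
    have h1 : (g', u) ∈ closedNbhd (LexProd G H) p :=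
      (memLex p.1 p.2 (g', u)).mpr (Or.inr (Or.inl hgadj))
    have h2 : (g', v) ∈ closedNbhd (LexProd G H) p :=
      (memLex p.1 p.2 (g', v)).mpr (Or.inr (Or.inl hgadj))
    have hne : (g', u) ≠ (g', v) := by
      intro hc; exact huv (congrArg Prod.snd hc)
    have := hs _ h1 _ h2 hne
    rcases this with h3 | ⟨_, h3⟩
    · exact G.loopless.irrefl _ h3
    · exact hadj h3
end

section
/- Let G be a connected graph with no simplicial vertex and H a graph with no simplicial vertex. Then gp_d(G∘H) = 0, i.e., the only dual general position set of G∘H is the empty set. -/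
open SimpleGraph

lemma my_dist_eq_two {V : Type*} (G : SimpleGraph V) {u v m : V}
    (h1 : G.Adj u m) (h2 : G.Adj m v) (hne : u ≠ v) (hnadj : ¬ G.Adj u v) :
    G.dist u v = 2 := by
  have hr : G.Reachable u v := ⟨Walk.cons h1 (Walk.cons h2 Walk.nil)⟩
  have hle : G.dist u v ≤ 2 := by
    have := SimpleGraph.dist_le (Walk.cons h1 (Walk.cons h2 Walk.nil))
    simpa using this
  have h0 : G.dist u v ≠ 0 := Nat.pos_iff_ne_zero.mp (hr.pos_dist_of_ne hne)
  have h1' : G.dist u v ≠ 1 := fun h => hnadj ((SimpleGraph.dist_eq_one_iff_adj (G := G)).mp h)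
  omega

lemma my_nonsimp_exists {V : Type*} (G : SimpleGraph V) {u : V} (h : ¬ IsSimplicial G u) :
    ∃ x y, G.Adj u x ∧ G.Adj u y ∧ x ≠ y ∧ ¬ G.Adj x y := by
  simp only [IsSimplicial, closedNbhd, Set.mem_insert_iff, mem_neighborSet, not_forall] at h
  obtain ⟨x, hx, y, hy, hne, hnadj⟩ := h
  rcases hx with rfl | hx
  · rcases hy with rfl | hy
    · exact absurd rfl hne
    · exact absurd hy hnadj
  · rcases hy with rfl | hy
    · exact absurd hx.symm hnadj
    · exact ⟨x, y, hx, hy, hne, hnadj⟩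

/-- If `m ∈ X` is an interior vertex of a shortest `u,v`-path, and both the `X,X` and
the `Xᶜ,Xᶜ` positionability hold for `u,v`, then contradiction. -/
lemma my_middle_contra {V : Type*} {G : SimpleGraph V} {X : Set V} {u v m : V}
    (hX : IsDualGPSet G X)
    (h1 : G.Adj u m) (h2 : G.Adj m v) (hne : u ≠ v) (hnadj : ¬ G.Adj u v)
    (hmX : m ∈ X) (hmu : m ≠ u) (hmv : m ≠ v)
    (hcase : (u ∈ X ∧ v ∈ X) ∨ (u ∉ X ∧ v ∉ X)) : False := by
  have hd : G.dist u v = 2 := my_dist_eq_two G h1 h2 hne hnadj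
  set p : G.Walk u v := Walk.cons h1 (Walk.cons h2 Walk.nil) with hp
  have hlen : p.length = G.dist u v := by simp [hp, hd]
  have hsup : m ∈ p.support := by simp [hp]
  have hpos : Positionable G X u v := by
    rcases hcase with ⟨hu, hv⟩ | ⟨hu, hv⟩
    · exact hX.1 u hu v hv
    · exact hX.2 u hu v hv
  rcases hpos p hlen m hsup hmX with h | h
  · exact hmu h
  · exact hmv h

lemma my_dualGP_empty {α β : Type*} [Fintype α] [Fintype β]
    (G : SimpleGraph α) (H : SimpleGraph β)
    (hsG : ∀ u : α, ¬ IsSimplicial G u) (hsH : ∀ u : β, ¬ IsSimplicial H u)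
    (X : Set (α × β)) (hX : IsDualGPSet (LexProd G H) X) : X = ∅ := by
  by_contra hne
  obtain ⟨⟨g, h⟩, hgh⟩ := Set.nonempty_iff_ne_empty.mpr hne
  obtain ⟨a, b, hga, hgb, hab, hnab⟩ := my_nonsimp_exists G (hsG g)
  -- For any h1 h3, exactly one of (a,h1), (b,h3) is in X.
  have key : ∀ h1 h3 : β, ¬ (((a, h1) ∈ X ∧ (b, h3) ∈ X) ∨ ((a, h1) ∉ X ∧ (b, h3) ∉ X)) := by
    intro h1 h3 hcase
    refine my_middle_contra (G := LexProd G H) hX (u := (a, h1)) (m := (g, h)) (v := (b, h3))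
      (Or.inl hga.symm) (Or.inl hgb) ?_ ?_ hgh ?_ ?_ hcase
    · intro heq
      exact hab (congrArg Prod.fst heq)
    · rintro (hadj | ⟨heq, _⟩)
      · exact hnab hadj
      · exact hab heq
    · intro heq
      simp only [Prod.mk.injEq] at heq
      exact G.loopless.irrefl g (heq.1 ▸ hga)
    · intro heq
      simp only [Prod.mk.injEq] at heq
      exact G.loopless.irrefl g (heq.1 ▸ hgb)
  -- Hence one of the fibers {a}×β or {b}×β is contained in X.
  have fiber : (∀ t : β, (a, t) ∈ X) ∨ (∀ t : β, (b, t) ∈ X) := by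
    by_cases hah : (a, h) ∈ X
    · left
      intro t
      have hbh : (b, h) ∉ X := fun hb => key h h (Or.inl ⟨hah, hb⟩)
      by_contra hat
      exact key t h (Or.inr ⟨hat, hbh⟩)
    · right
      intro t
      by_contra hbt
      exact key h t (Or.inr ⟨hah, hbt⟩)
  -- In a full fiber, use non-simpliciality of H to get a contradiction.
  have fiber_contra : ∀ c : α, (∀ t : β, (c, t) ∈ X) → False := by
    intro c hc
    obtain ⟨x, y, hhx, hhy, hxy, hnxy⟩ := my_nonsimp_exists H (hsH h)
    refine my_middle_contra (G := LexProd G H) hX (u := (c, x)) (m := (c, h)) (v := (c, y))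
      (Or.inr ⟨rfl, hhx.symm⟩) (Or.inr ⟨rfl, hhy⟩) ?_ ?_ (hc h) ?_ ?_ (Or.inl ⟨hc x, hc y⟩)
    · intro heq
      exact hxy (congrArg Prod.snd heq)
    · rintro (hadj | ⟨_, hadj⟩)
      · exact (G.loopless.irrefl c) hadj
      · exact hnxy hadj
    · intro heq
      simp only [Prod.mk.injEq] at heq
      exact H.loopless.irrefl h (heq.2 ▸ hhx)
    · intro heq
      simp only [Prod.mk.injEq] at heq
      exact H.loopless.irrefl h (heq.2 ▸ hhy)
  rcases fiber with hf | hf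
  · exact fiber_contra a hf
  · exact fiber_contra b hf

/-- if G and H have no simplicial vertices (G connected), then
gp_d(G ∘ H) = 0 and the only dual general position set of G ∘ H is ∅. -/
theorem gpd_lexProd_zero {α β : Type*} [Fintype α] [Fintype β]
    (G : SimpleGraph α) (H : SimpleGraph β) (hG : G.Connected)
    (hsG : ∀ u : α, ¬ IsSimplicial G u) (hsH : ∀ u : β, ¬ IsSimplicial H u) :
    gpd (LexProd G H) = 0 ∧
    ∀ X : Set (α × β), IsDualGPSet (LexProd G H) X → X = ∅ := by
  have hmain := my_dualGP_empty G H hsG hsH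
  refine ⟨?_, hmain⟩
  have hset : {n | ∃ X : Set (α × β), IsDualGPSet (LexProd G H) X ∧ X.ncard = n} = {0} := by
    ext n
    simp only [Set.mem_setOf_eq, Set.mem_singleton_iff]
    constructor
    · rintro ⟨X, hX, rfl⟩
      rw [hmain X hX]
      simp
    · rintro rfl
      refine ⟨∅, ⟨?_, ?_⟩, by simp⟩
      · intro u hu; exact absurd hu (Set.notMem_empty u)
      · intro u _ v _ p _ w _ hw
        exact absurd hw (Set.notMem_empty w)
  rw [gpd, hset]
  simp
end
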